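/- arXiv:1212.1968 — 8 statements merged into one kernel-verified Lean document; each statement's English description precedes it below -/
import Mathlib

section
/- Let X be a real Banach space and T : X ⇉ X* a monotone operator whose domain D_T is bounded. Then the following three conditions are equivalent: (i) for every x ∉ cl D_T one has sup{⟨z*, x − z⟩/‖x − z‖ : (z,z*) ∈ G(T)} = ∞; (ii) π₁ dom φ_T ⊆ cl D_T; (iii) cl D_T = cl(co D_T) = cl(π₁ dom φ_T). Moreover, each of them implies (iv): cl D_T is convex. -/
open Set Bornology
open scoped Pointwise

noncomputable section

variable {X : Type*} [NormedAddCommGroup X] [NormedSpace ℝ X]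

/-- The topological dual of `X`. -/
abbrev DualX (X : Type*) [NormedAddCommGroup X] [NormedSpace ℝ X] := X →L[ℝ] ℝ

/-- Domain of a set-valued operator `T : X ⇉ X*`. -/
def OpDom (T : X → Set (DualX X)) : Set X := {x | (T x).Nonempty}

/-- Range of a set-valued operator `T : X ⇉ X*`. -/
def OpRan (T : X → Set (DualX X)) : Set (DualX X) := {p | ∃ x, p ∈ T x}

/-- `T` is a monotone operator. -/
def IsMonotoneOp (T : X → Set (DualX X)) : Prop :=
  ∀ ⦃x x' y y'⦄, x' ∈ T x → y' ∈ T y → 0 ≤ (x' - y') (x - y)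

/-- `T` is a maximal monotone operator: it is monotone and no monotone operator has graph
strictly containing the graph of `T`. -/
def IsMaxMonotone (T : X → Set (DualX X)) : Prop :=
  IsMonotoneOp T ∧
    ∀ S : X → Set (DualX X), IsMonotoneOp S → (∀ x, T x ⊆ S x) → ∀ x, S x ⊆ T x

/-- `L(x, x*, T) = sup {⟨y* − x*, x − y⟩/‖x − y‖ : (y,y*) ∈ G(T), y ≠ x}`, as a value
in `[-∞, ∞]` (the sup of the empty set being `-∞`). -/
def LVal (T : X → Set (DualX X)) (x : X) (x' : DualX X) : EReal :=
  sSup ((fun r : ℝ => (r : EReal)) ''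
    {r | ∃ y y', y' ∈ T y ∧ y ≠ x ∧ r = (y' - x') (x - y) / ‖x - y‖})

/-- The distance from a point `x*` to a set `A ⊆ X*`, as a value in `[-∞,∞]`
(the inf of the empty set being `+∞`). -/
def DistE (x' : DualX X) (A : Set (DualX X)) : EReal :=
  sInf ((fun y' : DualX X => (‖x' - y'‖ : EReal)) '' A)

/-- A maximal monotone operator is regular when `L(x,x*,T) = d(x*, T(x))` everywhere. -/
def IsRegularOp (T : X → Set (DualX X)) : Prop :=
  ∀ x : X, ∀ x' : DualX X, LVal T x x' = DistE x' (T x)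

/-- The regularity property: `L(x, 0, T) < ∞` implies `x ∈ D_T`. -/
def RegularityProperty (T : X → Set (DualX X)) : Prop :=
  ∀ x : X, LVal T x 0 < ⊤ → x ∈ OpDom T

/-- `π₁ dom φ_T`: the projection onto `X` of the set where the Fitzpatrick function of `T`
is finite. -/
def FitzDom1 (T : X → Set (DualX X)) : Set X :=
  {x | ∃ x' : DualX X, BddAbove {r : ℝ | ∃ z z', z' ∈ T z ∧ r = (x' - z') (z - x)}}

/-- `π₂ dom φ_T`: the projection onto `X*` of the set where the Fitzpatrick function of `T`
is finite. -/
def FitzDom2 (T : X → Set (DualX X)) : Set (DualX X) :=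
  {x' | ∃ x : X, BddAbove {r : ℝ | ∃ z z', z' ∈ T z ∧ r = (x' - z') (z - x)}}

/-- The sum of two set-valued operators. -/
def OpSum (T S : X → Set (DualX X)) : X → Set (DualX X) :=
  fun x => {u | ∃ t' ∈ T x, ∃ s' ∈ S x, u = t' + s'}

/-- The convex subdifferential of a real-valued function. -/
def Subdiff (f : X → ℝ) (x : X) : Set (DualX X) :=
  {x' | ∀ y : X, f x + x' (y - x) ≤ f y}

/-- The subdifferential `∂I_C` of the indicator function of `C`. -/
def IndSubdiff (C : Set X) (x : X) : Set (DualX X) :=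
  {x' | x ∈ C ∧ ∀ y ∈ C, x' (y - x) ≤ 0}

/-- A set-valued operator is bounded if it maps bounded sets to bounded sets. -/
def IsBoundedOp (T : X → Set (DualX X)) : Prop :=
  ∀ A : Set X, IsBounded A → IsBounded {p : DualX X | ∃ x ∈ A, p ∈ T x}

/-- Maximal monotone operators of type (FPV). -/
def IsFPV (T : X → Set (DualX X)) : Prop :=
  IsMaxMonotone T ∧
    ∀ U : Set X, IsOpen U → Convex ℝ U → (U ∩ OpDom T).Nonempty →
      ∀ x : X, ∀ x' : DualX X, x ∈ U →
        (∀ z z', z' ∈ T z → z ∈ U → 0 ≤ (x' - z') (x - z)) → x' ∈ T x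

/-- The class `𝒞₀(T)`. -/
def CZero (T : X → Set (DualX X)) : Set (Set X) :=
  {C | IsClosed C ∧ Convex ℝ C ∧ (OpDom T ∩ interior C).Nonempty}

/-- The class `𝒞₁(T)`. -/
def COne (T : X → Set (DualX X)) : Set (Set X) :=
  {C | IsClosed C ∧ Convex ℝ C ∧
    ∃ Y : Submodule ℝ X, IsClosed (Y : Set X) ∧
      (Y : Set X) = ⋃ (l : ℝ) (_ : 0 < l), l • (convexHull ℝ (OpDom T) - C)}

/-- `T` is `𝒞₀`-maximal. -/
def CZeroMaximal (T : X → Set (DualX X)) : Prop :=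
  ∀ C ∈ CZero T, IsMaxMonotone (OpSum T (IndSubdiff C))

/-- `T` is `𝒞₁`-maximal. -/
def COneMaximal (T : X → Set (DualX X)) : Prop :=
  ∀ C ∈ COne T, IsMaxMonotone (OpSum T (IndSubdiff C))

/-- `K_{y,A} = {(1−t)y + ta : t ∈ [0,1], a ∈ A}`. -/
def Kseg (y : X) (A : Set X) : Set X :=
  {p | ∃ t ∈ Icc (0:ℝ) 1, ∃ a ∈ A, p = (1 - t) • y + t • a}

/-- `T` is directionally inf bounded at `x`. -/
def DirInfBdd (T : X → Set (DualX X)) (x : X) : Prop :=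
  ∀ y : X, ∃ ε > (0:ℝ), ∃ M > (0:ℝ),
    ∀ z ∈ Kseg y (Metric.ball x ε) ∩ OpDom T, ∃ z' ∈ T z, z' (z - y) ≤ M * ‖z - y‖

/-- The weak*-closure of a subset of the dual. -/
def WStarClosure (A : Set (DualX X)) : Set (DualX X) :=
  ⇑StrongDual.toWeakDual ⁻¹' closure (⇑StrongDual.toWeakDual '' A)
lemma co_sub_fitz (T : X → Set (DualX X)) (hmono : IsMonotoneOp T) :
    convexHull ℝ (OpDom T) ⊆ FitzDom1 T := by
  have key : convexHull ℝ (OpDom T) ⊆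
      {x | ∃ x' : DualX X, ∃ M : ℝ, ∀ z z', z' ∈ T z → (x' - z') (z - x) ≤ M} := by
    apply convexHull_min
    · rintro x ⟨x', hx'⟩
      refine ⟨x', 0, fun z z' hz' => ?_⟩
      have h := hmono hx' hz'
      have e : (x' - z') (z - x) = -((x' - z') (x - z)) := by
        rw [← map_neg]; congr 1; abel
      rw [e]; linarith
    · rintro x ⟨x₁, M₁, h1⟩ y ⟨x₂, M₂, h2⟩ a b ha hb hab
      obtain rfl : b = 1 - a := by linarith
      refine ⟨a • x₁ + (1-a) • x₂,
        a*M₁ + (1-a)*M₂ + (a * x₁ x + (1-a) * x₂ y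
          - (a • x₁ + (1-a) • x₂) (a • x + (1-a) • y)), fun z z' hz' => ?_⟩
      have H1 := h1 z z' hz'
      have H2 := h2 z z' hz'
      have e : ((a • x₁ + (1-a) • x₂) - z') (z - (a • x + (1-a) • y)) =
          a * ((x₁ - z') (z - x)) + (1-a) * ((x₂ - z') (z - y)) +
          (a * x₁ x + (1-a) * x₂ y
            - (a • x₁ + (1-a) • x₂) (a • x + (1-a) • y)) := by
        simp only [ContinuousLinearMap.sub_apply, ContinuousLinearMap.add_apply,
          ContinuousLinearMap.smul_apply, map_sub, map_add, map_smul, smul_eq_mul]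
        ring
      rw [e]
      nlinarith [mul_le_mul_of_nonneg_left H1 ha, mul_le_mul_of_nonneg_left H2 hb]
  intro x hx
  obtain ⟨x', M, h⟩ := key hx
  exact ⟨x', M, by rintro r ⟨z, z', hz', rfl⟩; exact h z z' hz'⟩

/-- For a monotone operator with bounded domain, conditions (i),(ii),(iii)
are equivalent and each implies that `cl D_T` is convex. -/
theorem statement0 {X : Type*} [NormedAddCommGroup X] [NormedSpace ℝ X] [CompleteSpace X]
    (T : X → Set (DualX X)) (hmono : IsMonotoneOp T)
    (hbdd : IsBounded (OpDom T)) :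
    ((∀ x : X, x ∉ closure (OpDom T) →
        ¬ BddAbove {r : ℝ | ∃ z z', z' ∈ T z ∧ r = z' (x - z) / ‖x - z‖}) ↔
      FitzDom1 T ⊆ closure (OpDom T)) ∧
    ((FitzDom1 T ⊆ closure (OpDom T)) ↔
      (closure (OpDom T) = closure (convexHull ℝ (OpDom T)) ∧
        closure (OpDom T) = closure (FitzDom1 T))) ∧
    ((closure (OpDom T) = closure (convexHull ℝ (OpDom T)) ∧
        closure (OpDom T) = closure (FitzDom1 T)) →
      Convex ℝ (closure (OpDom T))) := by
  have hco := co_sub_fitz T hmono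
  have hDsub : OpDom T ⊆ FitzDom1 T := (subset_convexHull ℝ _).trans hco
  have hii_iff : (FitzDom1 T ⊆ closure (OpDom T)) ↔
      (closure (OpDom T) = closure (convexHull ℝ (OpDom T)) ∧
        closure (OpDom T) = closure (FitzDom1 T)) := by
    constructor
    · intro h2
      constructor
      · refine le_antisymm (closure_mono (subset_convexHull ℝ _)) ?_
        exact closure_minimal (hco.trans h2) isClosed_closure
      · exact le_antisymm (closure_mono hDsub) (closure_minimal h2 isClosed_closure)
    · rintro ⟨_, h3b⟩
      intro x hx
      rw [h3b]
      exact subset_closure hx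
  refine ⟨?_, hii_iff, ?_⟩
  · constructor
    · -- (i) → (ii)
      intro h1 x hx
      by_contra hxc
      obtain ⟨x', M, hM⟩ : ∃ x' : DualX X, ∃ M, ∀ z z', z' ∈ T z → (x' - z') (z - x) ≤ M := by
        obtain ⟨x', hB⟩ := hx
        obtain ⟨M, hM⟩ := hB
        exact ⟨x', M, fun z z' hz' => hM ⟨z, z', hz', rfl⟩⟩
      have hne : (OpDom T).Nonempty := by
        by_contra hemp
        rw [not_nonempty_iff_eq_empty] at hemp
        refine h1 x hxc ⟨0, ?_⟩
        rintro r ⟨z, z', hz', -⟩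
        exact absurd (show z ∈ OpDom T from ⟨z', hz'⟩) (by simp [hemp])
      have hd : 0 < Metric.infDist x (OpDom T) := by
        rw [← Metric.infDist_closure]
        exact (isClosed_closure.notMem_iff_infDist_pos hne.closure).1 hxc
      set d := Metric.infDist x (OpDom T) with hddef
      refine h1 x hxc ⟨‖x'‖ + |M| / d, ?_⟩
      rintro r ⟨z, z', hz', rfl⟩
      have hzd : z ∈ OpDom T := ⟨z', hz'⟩
      have hdle : d ≤ ‖x - z‖ := by
        have := Metric.infDist_le_dist_of_mem (x := x) hzd
        rwa [dist_eq_norm] at this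
      have hnz : 0 < ‖x - z‖ := lt_of_lt_of_le hd hdle
      rw [div_le_iff₀ hnz]
      have hub : z' (x - z) ≤ ‖x'‖ * ‖x - z‖ + M := by
        have h1' : (x' - z') (z - x) ≤ M := hM z z' hz'
        have h2' : x' (x - z) ≤ ‖x'‖ * ‖x - z‖ :=
          le_trans (le_abs_self _) ((x'.le_opNorm _).trans_eq' (Real.norm_eq_abs _).symm)
        have e : z' (x - z) = x' (x - z) + (x' - z') (z - x) := by
          simp only [ContinuousLinearMap.sub_apply, map_sub]
          ring
        rw [e]; linarith
      have hdm : |M| / d * d = |M| := div_mul_cancel₀ _ (ne_of_gt hd)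
      nlinarith [le_abs_self M, abs_nonneg M, div_nonneg (abs_nonneg M) hd.le,
        mul_le_mul_of_nonneg_left hdle (div_nonneg (abs_nonneg M) hd.le)]
    · -- (ii) → (i)
      intro h2 x hx
      have hxf : x ∉ FitzDom1 T := fun hxf => hx (h2 hxf)
      intro hB
      obtain ⟨K, hK⟩ := hB
      obtain ⟨R, hR⟩ := hbdd.subset_closedBall x
      apply hxf
      refine ⟨0, |K| * |R|, ?_⟩
      rintro r ⟨z, z', hz', rfl⟩
      have hzd : z ∈ OpDom T := ⟨z', hz'⟩
      have hnz : 0 < ‖x - z‖ := by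
        rw [norm_pos_iff, sub_ne_zero]
        rintro rfl
        exact hx (subset_closure hzd)
      have hRz : ‖x - z‖ ≤ |R| := by
        have := hR hzd
        rw [Metric.mem_closedBall, dist_comm, dist_eq_norm] at this
        exact this.trans (le_abs_self R)
      have hKr : z' (x - z) / ‖x - z‖ ≤ K := hK ⟨z, z', hz', rfl⟩
      rw [div_le_iff₀ hnz] at hKr
      have e : ((0 : DualX X) - z') (z - x) = z' (x - z) := by
        simp only [ContinuousLinearMap.sub_apply, ContinuousLinearMap.zero_apply, map_sub]
        ring
      rw [e]
      nlinarith [le_abs_self K, abs_nonneg K, mul_le_mul_of_nonneg_left hRz (abs_nonneg K)]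
  · rintro ⟨h3a, -⟩
    rw [h3a]
    exact (convex_convexHull ℝ _).closure
end
end

section
/- Let X be a real Banach space and T : X ⇉ X* a maximal monotone operator whose domain D_T is bounded. If cl D_T is convex, then for every x ∉ cl D_T one has sup{⟨z*, x − z⟩/‖x − z‖ : (z,z*) ∈ G(T)} = ∞. -/
open Set Bornology
open scoped Pointwise

noncomputable section

variable {X : Type*} [NormedAddCommGroup X] [NormedSpace ℝ X]

/-- For a maximal monotone operator with bounded domain, convexity of
`cl D_T` implies Simons' condition (i). -/
theorem statement1 {X : Type*} [NormedAddCommGroup X] [NormedSpace ℝ X] [CompleteSpace X]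
    (T : X → Set (DualX X)) (hmax : IsMaxMonotone T)
    (hbdd : IsBounded (OpDom T))
    (hconv : Convex ℝ (closure (OpDom T))) :
    ∀ x : X, x ∉ closure (OpDom T) →
      ¬ BddAbove {r : ℝ | ∃ z z', z' ∈ T z ∧ r = z' (x - z) / ‖x - z‖} := by
  intro x hx hbd
  obtain ⟨M, hM⟩ := hbd
  obtain ⟨f, u, hfs, hux⟩ := geometric_hahn_banach_closed_point hconv isClosed_closure hx
  set δ := f x - u with hδdef
  have hδpos : 0 < δ := sub_pos.2 hux
  obtain ⟨R, hR⟩ := hbdd.subset_closedBall 0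
  set R' : ℝ := max R 0 with hR'
  set C : ℝ := max M 0 * (‖x‖ + R') with hC
  -- key bound on z'(x-z)
  have hbound : ∀ z z', z' ∈ T z → z' (x - z) ≤ C := by
    intro z z' hz'
    have hzD : z ∈ OpDom T := ⟨z', hz'⟩
    have hzcl : z ∈ closure (OpDom T) := subset_closure hzD
    have hne : x ≠ z := by rintro rfl; exact hx hzcl
    have hnorm : 0 < ‖x - z‖ := by
      rw [norm_pos_iff]; exact sub_ne_zero.2 hne
    have hratio : z' (x - z) / ‖x - z‖ ≤ M := hM ⟨z, z', hz', rfl⟩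
    have hnz : ‖z‖ ≤ R' := le_trans (by simpa using hR hzD) (le_max_left _ _)
    have hxz : ‖x - z‖ ≤ ‖x‖ + R' :=
      le_trans (norm_sub_le _ _) (by linarith)
    have h1 : z' (x - z) ≤ max M 0 * ‖x - z‖ := by
      have := div_le_iff₀ hnorm |>.1 (le_trans hratio (le_max_left M 0))
      linarith [this]
    calc z' (x - z) ≤ max M 0 * ‖x - z‖ := h1
      _ ≤ max M 0 * (‖x‖ + R') :=
        mul_le_mul_of_nonneg_left hxz (le_max_right M 0)
  set n : ℝ := max (C / δ) 0 + 1 with hn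
  have hnpos : 0 < n := by positivity
  have hnδ : C < n * δ := by
    have h1 : C / δ ≤ max (C / δ) 0 := le_max_left _ _
    have h2 : C ≤ max (C / δ) 0 * δ := by
      rw [div_le_iff₀ hδpos] at h1; linarith
    have : max (C / δ) 0 * δ < n * δ := by
      apply mul_lt_mul_of_pos_right _ hδpos
      linarith
    exact lt_of_le_of_lt h2 this
  -- monotone relatedness of (x, n • f)
  have hkey : ∀ z z', z' ∈ T z → 0 ≤ ((n • f : DualX X) - z') (x - z) := by
    intro z z' hz'
    have hzD : z ∈ OpDom T := ⟨z', hz'⟩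
    have hfz : f z < u := hfs z (subset_closure hzD)
    have hfxz : δ ≤ f (x - z) := by
      rw [map_sub]; simp only [hδdef]; linarith
    have h1 : n * δ ≤ n * f (x - z) :=
      mul_le_mul_of_nonneg_left hfxz (le_of_lt hnpos)
    have h2 : z' (x - z) ≤ C := hbound z z' hz'
    have : ((n • f : DualX X) - z') (x - z) = n * f (x - z) - z' (x - z) := by
      simp [ContinuousLinearMap.sub_apply]
    rw [this]; linarith
  -- extend T by (x, n • f)
  set S : X → Set (DualX X) := fun y => T y ∪ {g | y = x ∧ g = n • f} with hS
  have hSmono : IsMonotoneOp S := by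
    rintro a a' b b' ha hb
    rcases ha with ha | ⟨hax, haf⟩ <;> rcases hb with hb | ⟨hbx, hbf⟩
    · exact hmax.1 ha hb
    · rw [hbx, hbf]
      have h := hkey a a' ha
      have heq : (a' - (n • f : DualX X)) (a - x) = ((n • f : DualX X) - a') (x - a) := by
        simp only [ContinuousLinearMap.sub_apply, map_sub]; ring
      rw [heq]; exact h
    · rw [hax, haf]; exact hkey b b' hb
    · rw [hax, haf, hbx, hbf]; simp
  have hmem : (n • f : DualX X) ∈ T x := by
    apply hmax.2 S hSmono (fun y => Set.subset_union_left) x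
    exact Or.inr ⟨rfl, rfl⟩
  exact hx (subset_closure ⟨n • f, hmem⟩)
end
end

section
/- Let X be a real Banach space and T : X ⇉ X* a monotone operator whose range R_T is bounded. Then the following three conditions are equivalent: (i) for every x* ∉ cl R_T one has sup{⟨x* − z*, z⟩/‖x* − z*‖ : (z,z*) ∈ G(T)} = ∞; (ii) π₂ dom φ_T ⊆ cl R_T; (iii) cl R_T = cl(co R_T) = cl(π₂ dom φ_T). Moreover, each of them implies (iv): cl R_T is convex. -/
open Set Bornology
open scoped Pointwise

noncomputable section

variable {X : Type*} [NormedAddCommGroup X] [NormedSpace ℝ X]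

lemma ranSubFitz {X : Type*} [NormedAddCommGroup X] [NormedSpace ℝ X]
    (T : X → Set (DualX X)) (hmono : IsMonotoneOp T) :
    OpRan T ⊆ FitzDom2 T := by
  rintro x' ⟨x, hx⟩
  refine ⟨x, 0, ?_⟩
  rintro r ⟨z, z', hz', rfl⟩
  have h1 := hmono hx hz'
  have h2 : (x' - z') (z - x) = -((x' - z') (x - z)) := by
    rw [← map_neg, neg_sub]
  linarith [h1, h2.le, h2.ge]

lemma fitzConvex {X : Type*} [NormedAddCommGroup X] [NormedSpace ℝ X]
    (T : X → Set (DualX X)) : Convex ℝ (FitzDom2 T) := by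
  rintro x'₁ ⟨x₁, M₁, hM₁⟩ x'₂ ⟨x₂, M₂, hM₂⟩ a b ha hb hab
  refine ⟨a • x₁ + b • x₂,
    a * M₁ + b * M₂ +
      (a * x'₁ x₁ + b * x'₂ x₂ - (a • x'₁ + b • x'₂) (a • x₁ + b • x₂)), ?_⟩
  rintro r ⟨z, z', hz', rfl⟩
  have hr₁ : (x'₁ - z') (z - x₁) ≤ M₁ := hM₁ ⟨z, z', hz', rfl⟩
  have hr₂ : (x'₂ - z') (z - x₂) ≤ M₂ := hM₂ ⟨z, z', hz', rfl⟩
  have key : ((a • x'₁ + b • x'₂) - z') (z - (a • x₁ + b • x₂)) =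
      a * ((x'₁ - z') (z - x₁)) + b * ((x'₂ - z') (z - x₂)) +
      (a * x'₁ x₁ + b * x'₂ x₂ - (a • x'₁ + b • x'₂) (a • x₁ + b • x₂)) := by
    simp only [ContinuousLinearMap.sub_apply, ContinuousLinearMap.add_apply,
      ContinuousLinearMap.smul_apply, map_sub, map_add, map_smul, smul_eq_mul]
    linear_combination (z' z) * hab
  have h1 : a * ((x'₁ - z') (z - x₁)) ≤ a * M₁ := mul_le_mul_of_nonneg_left hr₁ ha
  have h2 : b * ((x'₂ - z') (z - x₂)) ≤ b * M₂ := mul_le_mul_of_nonneg_left hr₂ hb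
  linarith [key.le, key.ge]

/-- For a monotone operator with bounded range, the dual conditions
(i),(ii),(iii) are equivalent and each implies that `cl R_T` is convex. -/
theorem statement2 {X : Type*} [NormedAddCommGroup X] [NormedSpace ℝ X] [CompleteSpace X]
    (T : X → Set (DualX X)) (hmono : IsMonotoneOp T)
    (hbdd : IsBounded (OpRan T)) :
    ((∀ x' : DualX X, x' ∉ closure (OpRan T) →
        ¬ BddAbove {r : ℝ | ∃ z z', z' ∈ T z ∧ r = (x' - z') z / ‖x' - z'‖}) ↔
      FitzDom2 T ⊆ closure (OpRan T)) ∧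
    ((FitzDom2 T ⊆ closure (OpRan T)) ↔
      (closure (OpRan T) = closure (convexHull ℝ (OpRan T)) ∧
        closure (OpRan T) = closure (FitzDom2 T))) ∧
    ((closure (OpRan T) = closure (convexHull ℝ (OpRan T)) ∧
        closure (OpRan T) = closure (FitzDom2 T)) →
      Convex ℝ (closure (OpRan T))) := by
  obtain ⟨K, hK⟩ := isBounded_iff_forall_norm_le.mp hbdd
  have hRF := ranSubFitz T hmono
  -- (ii) → (i)
  have h21 : FitzDom2 T ⊆ closure (OpRan T) →
      (∀ x' : DualX X, x' ∉ closure (OpRan T) →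
        ¬ BddAbove {r : ℝ | ∃ z z', z' ∈ T z ∧ r = (x' - z') z / ‖x' - z'‖}) := by
    intro h2 x' hx' ⟨M, hM⟩
    apply hx'
    apply h2
    refine ⟨0, (‖x'‖ + K) * max M 0, ?_⟩
    rintro r ⟨z, z', hz', rfl⟩
    have hz'R : z' ∈ OpRan T := ⟨z, hz'⟩
    have hne : x' - z' ≠ 0 := by
      intro h
      exact hx' (subset_closure (by rwa [sub_eq_zero.mp h]))
    have hpos : (0:ℝ) < ‖x' - z'‖ := norm_pos_iff.mpr hne
    have hq : (x' - z') z / ‖x' - z'‖ ≤ M := hM ⟨z, z', hz', rfl⟩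
    have hval : (x' - z') (z - 0) = ‖x' - z'‖ * ((x' - z') z / ‖x' - z'‖) := by
      rw [mul_div_cancel₀ _ (ne_of_gt hpos), sub_zero]
    rw [hval]
    calc ‖x' - z'‖ * ((x' - z') z / ‖x' - z'‖)
        ≤ ‖x' - z'‖ * max M 0 :=
          mul_le_mul_of_nonneg_left (hq.trans (le_max_left _ _)) (norm_nonneg _)
      _ ≤ (‖x'‖ + K) * max M 0 := by
          apply mul_le_mul_of_nonneg_right _ (le_max_right _ _)
          calc ‖x' - z'‖ ≤ ‖x'‖ + ‖z'‖ := norm_sub_le _ _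
            _ ≤ ‖x'‖ + K := by linarith [hK z' hz'R]
  -- (i) → (ii)
  have h12 : (∀ x' : DualX X, x' ∉ closure (OpRan T) →
      ¬ BddAbove {r : ℝ | ∃ z z', z' ∈ T z ∧ r = (x' - z') z / ‖x' - z'‖}) →
      FitzDom2 T ⊆ closure (OpRan T) := by
    intro h1 x' hx'
    by_contra hnc
    apply h1 x' hnc
    obtain ⟨x, M, hM⟩ := hx'
    by_cases hne : (OpRan T).Nonempty
    · have hd : 0 < Metric.infDist x' (closure (OpRan T)) :=
        (isClosed_closure.notMem_iff_infDist_pos hne.closure).mp hnc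
      set d := Metric.infDist x' (closure (OpRan T)) with hd_def
      refine ⟨max (M + (‖x'‖ + K) * ‖x‖) 0 / d, ?_⟩
      rintro r ⟨z, z', hz', rfl⟩
      have hz'R : z' ∈ OpRan T := ⟨z, hz'⟩
      have hdz : d ≤ ‖x' - z'‖ := by
        rw [← dist_eq_norm]
        exact Metric.infDist_le_dist_of_mem (subset_closure hz'R)
      have hnum : (x' - z') z ≤ max (M + (‖x'‖ + K) * ‖x‖) 0 := by
        have h1' : (x' - z') (z - x) ≤ M := hM ⟨z, z', hz', rfl⟩
        have h2' : (x' - z') x ≤ (‖x'‖ + K) * ‖x‖ := by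
          calc (x' - z') x ≤ ‖(x' - z') x‖ := le_abs_self _
            _ ≤ ‖x' - z'‖ * ‖x‖ := (x' - z').le_opNorm x
            _ ≤ (‖x'‖ + K) * ‖x‖ := by
                apply mul_le_mul_of_nonneg_right _ (norm_nonneg _)
                calc ‖x' - z'‖ ≤ ‖x'‖ + ‖z'‖ := norm_sub_le _ _
                  _ ≤ ‖x'‖ + K := by linarith [hK z' hz'R]
        have h3' : (x' - z') z = (x' - z') (z - x) + (x' - z') x := by
          rw [← map_add, sub_add_cancel]
        have := le_max_left (M + (‖x'‖ + K) * ‖x‖) (0:ℝ)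
        linarith
      exact div_le_div₀ (le_max_right _ _) hnum hd hdz
    · refine ⟨0, ?_⟩
      rintro r ⟨z, z', hz', rfl⟩
      exact absurd ⟨z, hz'⟩ (fun h => hne ⟨z', h⟩)
  -- (ii) → (iii)
  have h23 : FitzDom2 T ⊆ closure (OpRan T) →
      (closure (OpRan T) = closure (convexHull ℝ (OpRan T)) ∧
        closure (OpRan T) = closure (FitzDom2 T)) := by
    intro h2
    have hcoF : convexHull ℝ (OpRan T) ⊆ FitzDom2 T :=
      convexHull_min hRF (fitzConvex T)
    constructor
    · refine le_antisymm (closure_mono (subset_convexHull ℝ _)) ?_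
      exact closure_minimal (hcoF.trans h2) isClosed_closure
    · refine le_antisymm (closure_mono hRF) ?_
      exact closure_minimal h2 isClosed_closure
  have h32 : (closure (OpRan T) = closure (convexHull ℝ (OpRan T)) ∧
        closure (OpRan T) = closure (FitzDom2 T)) →
      FitzDom2 T ⊆ closure (OpRan T) := by
    rintro ⟨-, h3b⟩ x' hx'
    rw [h3b]
    exact subset_closure hx'
  refine ⟨⟨fun h1 => h12 h1, fun h2 => h21 h2⟩, ⟨h23, h32⟩, ?_⟩
  rintro ⟨h3a, -⟩
  rw [h3a]
  exact (convex_convexHull ℝ _).closure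
end
end

section
/- Let X be a real Banach space and T : X ⇉ X* a maximal monotone operator whose range R_T is bounded. If the weak*-closure of R_T is convex, then for every x* not belonging to the weak*-closure of R_T one has sup{⟨x* − z*, z⟩/‖x* − z*‖ : (z,z*) ∈ G(T)} = ∞. -/
open Set Bornology
open scoped Pointwise

noncomputable section

variable {X : Type*} [NormedAddCommGroup X] [NormedSpace ℝ X]

open Set



instance locConv {X : Type*} [NormedAddCommGroup X] [NormedSpace ℝ X] :
    LocallyConvexSpace ℝ (WeakDual ℝ X) :=
  WeakBilin.locallyConvexSpace

/-- A weak*-continuous linear functional on the dual is evaluation at a point. -/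
lemma weakdual_repr {X : Type*} [NormedAddCommGroup X] [NormedSpace ℝ X]
    (f : WeakDual ℝ X →L[ℝ] ℝ) : ∃ x : X, ∀ g : WeakDual ℝ X, f g = g x := by
  set B := topDualPairing ℝ X with hB
  have hsem : WithSeminorms (LinearMap.toSeminormFamily B : X → Seminorm ℝ (WeakDual ℝ X)) :=
    B.weakBilin_withSeminorms
  let q : Seminorm ℝ (WeakDual ℝ X) := (normSeminorm ℝ ℝ).comp (f : WeakDual ℝ X →ₗ[ℝ] ℝ)
  have hq : Continuous q := by
    have : ⇑q = fun g => ‖f g‖ := rfl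
    rw [this]
    exact f.continuous.norm
  obtain ⟨s, C, hC0, hle⟩ := Seminorm.bound_of_continuous hsem q hq
  let L : s → (WeakDual ℝ X →ₗ[ℝ] ℝ) := fun i => B.flip (i : X)
  have hker : ⨅ i, LinearMap.ker (L i) ≤ LinearMap.ker (f : WeakDual ℝ X →ₗ[ℝ] ℝ) := by
    intro g hg
    simp only [Submodule.mem_iInf, LinearMap.mem_ker] at hg ⊢
    have h0 : (s.sup (LinearMap.toSeminormFamily B : X → Seminorm ℝ (WeakDual ℝ X))) g ≤ 0 := by
      apply Seminorm.finset_sup_apply_le le_rfl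
      intro i hi
      have h' : B g i = 0 := hg ⟨i, hi⟩
      have h2 : ‖B g i‖ = 0 := by rw [h']; exact norm_zero
      exact le_of_eq h2
    have h1 : ‖f g‖ ≤ 0 := by
      have := hle g
      simp only [Seminorm.smul_apply] at this
      calc ‖f g‖ = q g := rfl
        _ ≤ (C • s.sup (LinearMap.toSeminormFamily B : X → Seminorm ℝ (WeakDual ℝ X))) g := hle g
        _ ≤ 0 := by
            rw [Seminorm.smul_apply]
            have : (0:ℝ) ≤ (C:ℝ) := C.2
            simpa [NNReal.smul_def] using mul_nonpos_of_nonneg_of_nonpos this h0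
    simpa using norm_le_zero_iff.mp h1
  have hmem := mem_span_of_iInf_ker_le_ker (L := L) (K := (f : WeakDual ℝ X →ₗ[ℝ] ℝ)) hker
  obtain ⟨c, hc⟩ := (Submodule.mem_span_range_iff_exists_fun ℝ).mp hmem
  refine ⟨∑ i, c i • (i : X), fun g => ?_⟩
  have h2 := congrArg (fun K : WeakDual ℝ X →ₗ[ℝ] ℝ => K g) hc
  simp only [LinearMap.coe_sum, Finset.sum_apply, LinearMap.smul_apply,
    LinearMap.coe_coe, L, LinearMap.flip_apply, hB, topDualPairing_apply,
    smul_eq_mul] at h2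
  have h3 : f g = ∑ i : s, c i * g (i : X) := by exact h2.symm
  rw [h3, map_sum]
  simp [mul_comm]

/-- For a maximal monotone operator with bounded range, convexity of the
weak*-closure of `R_T` implies the dual Simons condition (i'). -/
theorem statement4 {X : Type*} [NormedAddCommGroup X] [NormedSpace ℝ X] [CompleteSpace X]
    (T : X → Set (DualX X)) (hmax : IsMaxMonotone T)
    (hbdd : IsBounded (OpRan T))
    (hconv : Convex ℝ (WStarClosure (OpRan T))) :
    ∀ x' : DualX X, x' ∉ WStarClosure (OpRan T) →
      ¬ BddAbove {r : ℝ | ∃ z z', z' ∈ T z ∧ r = (x' - z') z / ‖x' - z'‖} := by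

  intro x' hx'
  intro hbb
  classical
  have hsubW : OpRan T ⊆ WStarClosure (OpRan T) := by
    intro z hz
    have h : StrongDual.toWeakDual z ∈
        closure (⇑(StrongDual.toWeakDual (𝕜 := ℝ) (E := X)) '' (OpRan T)) :=
      subset_closure (Set.mem_image_of_mem _ hz)
    exact h
  have hsurj : Function.Surjective (⇑(StrongDual.toWeakDual (𝕜 := ℝ) (E := X))) :=
    (StrongDual.toWeakDual (𝕜 := ℝ) (E := X)).surjective
  have himg : (⇑StrongDual.toWeakDual) '' (WStarClosure (OpRan T)) =
      closure (⇑StrongDual.toWeakDual '' (OpRan T)) :=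
    Set.image_preimage_eq _ hsurj
  have hAconv : Convex ℝ (closure (⇑StrongDual.toWeakDual '' (OpRan T))) := by
    rw [← himg]
    exact hconv.is_linear_image ⟨fun a b => map_add _ a b, fun c a => map_smul _ c a⟩
  have hxA : StrongDual.toWeakDual x' ∉
      closure (⇑StrongDual.toWeakDual '' (OpRan T)) := hx'
  obtain ⟨f, u, hfu, hux⟩ :=
    geometric_hahn_banach_closed_point hAconv isClosed_closure hxA
  obtain ⟨x, hx⟩ := weakdual_repr f
  have hxx' : u < x' x := by
    have h := hux
    rw [hx] at h
    exact h
  have hsep : ∀ z', z' ∈ OpRan T → z' x < u := by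
    intro z' hz'
    have h := hfu _ (subset_closure (Set.mem_image_of_mem _ hz'))
    rwa [hx] at h
  set δ : ℝ := x' x - u with hδdef
  have hδ : 0 < δ := sub_pos.mpr hxx'
  obtain ⟨M, hM⟩ := isBounded_iff_forall_norm_le.mp hbdd
  obtain ⟨K, hK⟩ := hbb
  set K' : ℝ := max K 0 * (‖x'‖ + max M 0) with hK'def
  have hnum : ∀ z z', z' ∈ T z → (x' - z') z ≤ K' := by
    intro z z' hz
    have hz'R : z' ∈ OpRan T := ⟨z, hz⟩
    have hne : x' ≠ z' := by
      rintro rfl; exact hx' (hsubW hz'R)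
    have hpos : 0 < ‖x' - z'‖ := by
      rw [norm_pos_iff]; exact sub_ne_zero.mpr hne
    have hr : (x' - z') z / ‖x' - z'‖ ≤ K := hK ⟨z, z', hz, rfl⟩
    have h1 : (x' - z') z ≤ K * ‖x' - z'‖ := (div_le_iff₀ hpos).mp hr
    have h2 : K * ‖x' - z'‖ ≤ max K 0 * ‖x' - z'‖ :=
      mul_le_mul_of_nonneg_right (le_max_left _ _) hpos.le
    have h3 : ‖x' - z'‖ ≤ ‖x'‖ + max M 0 := by
      have h4 := hM z' hz'R
      have := norm_sub_le x' z'
      have := le_max_left M 0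
      linarith [le_max_left M 0]
    have h5 : max K 0 * ‖x' - z'‖ ≤ K' :=
      mul_le_mul_of_nonneg_left h3 (le_max_right _ _)
    linarith
  set t : ℝ := max (K' / δ) 0 with htdef
  have ht0 : 0 ≤ t := le_max_right _ _
  have htδ : K' ≤ t * δ := by
    have h : K' / δ ≤ t := le_max_left _ _
    calc K' = (K' / δ) * δ := (div_mul_cancel₀ _ hδ.ne').symm
      _ ≤ t * δ := mul_le_mul_of_nonneg_right h hδ.le
  have key : ∀ z z', z' ∈ T z → 0 ≤ (x' - z') (t • x - z) := by
    intro z z' hz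
    have h1 : δ ≤ (x' - z') x := by
      have h := hsep z' ⟨z, hz⟩
      simp only [ContinuousLinearMap.sub_apply]
      simp only [hδdef]
      linarith
    have h2 : (x' - z') (t • x - z) = t * ((x' - z') x) - (x' - z') z := by
      rw [map_sub, map_smul]
      simp [smul_eq_mul]
    rw [h2]
    have h3 := hnum z z' hz
    nlinarith
  set S : X → Set (DualX X) := fun y => T y ∪ {w | y = t • x ∧ w = x'} with hS
  have hflip : ∀ (p q : DualX X) (v w : X), (p - q) (v - w) = (q - p) (w - v) := by
    intro p q v w
    simp only [ContinuousLinearMap.sub_apply, map_sub]; ring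
  have hmono : IsMonotoneOp S := by
    intro a a₁ b b₁ ha hb
    rcases ha with ha | ⟨ha1, ha2⟩ <;> rcases hb with hb | ⟨hb1, hb2⟩
    · exact hmax.1 ha hb
    · rw [hb1, hb2, hflip]
      exact key a a₁ ha
    · rw [ha1, ha2]
      exact key b b₁ hb
    · rw [ha2, hb2]
      simp
  have hxT : x' ∈ T (t • x) :=
    hmax.2 S hmono (fun y => Set.subset_union_left) (t • x) (Or.inr ⟨rfl, rfl⟩)
  exact hx' (hsubW ⟨t • x, hxT⟩)
end
end

section
/- Let X be a real Banach space and T : X ⇉ X* a monotone operator with the regularity property, i.e. L(x, 0, T) < ∞ implies x ∈ D_T. Then π₁ dom φ_T ⊆ cl D_T; consequently cl D_T = cl(co D_T) = cl(π₁ dom φ_T) and cl D_T is convex. -/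
open Set Bornology
open scoped Pointwise

noncomputable section

variable {X : Type*} [NormedAddCommGroup X] [NormedSpace ℝ X]

private lemma lval_le_of_forall (T : X → Set (DualX X)) (x : X) (x' : DualX X) (B : ℝ)
    (h : ∀ y y', y' ∈ T y → y ≠ x → (y' - x') (x - y) / ‖x - y‖ ≤ B) :
    LVal T x x' ≤ (B : EReal) := by
  refine sSup_le ?_
  rintro e ⟨r, ⟨y, y', hy, hne, rfl⟩, rfl⟩
  exact EReal.coe_le_coe_iff.mpr (h y y' hy hne)

private lemma opdom_nonempty (T : X → Set (DualX X)) (hreg : RegularityProperty T) :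
    (OpDom T).Nonempty := by
  by_contra h
  rw [not_nonempty_iff_eq_empty] at h
  have hT : ∀ y : X, T y = ∅ := by
    intro y
    rw [eq_empty_iff_forall_notMem]
    intro y' hy'
    have : y ∈ OpDom T := ⟨y', hy'⟩
    simp [h] at this
  have h0 : (0 : X) ∈ OpDom T := by
    apply hreg
    have : LVal T 0 0 = ⊥ := by
      have hs : {r | ∃ y y', y' ∈ T y ∧ y ≠ (0:X) ∧
          r = (y' - 0) ((0:X) - y) / ‖(0:X) - y‖} = (∅ : Set ℝ) := by
        rw [eq_empty_iff_forall_notMem]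
        rintro r ⟨y, y', hy, -, -⟩
        simp [hT y] at hy
      rw [LVal, hs]
      simp
    rw [this]
    exact bot_lt_top
  simp [h] at h0

private lemma opdom_subset_fitz (T : X → Set (DualX X)) (hmono : IsMonotoneOp T) :
    OpDom T ⊆ FitzDom1 T := by
  rintro x ⟨x', hx'⟩
  refine ⟨x', 0, ?_⟩
  rintro r ⟨z, z', hz, rfl⟩
  have h := hmono hx' hz
  have : (x' - z') (z - x) = -((x' - z') (x - z)) := by
    rw [← map_neg]; congr 1; abel
  rw [this]
  linarith

private lemma fitz_convex (T : X → Set (DualX X)) : Convex ℝ (FitzDom1 T) := by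
  rintro x₁ ⟨x₁', M₁, hM₁⟩ x₂ ⟨x₂', M₂, hM₂⟩ a b ha hb hab
  refine ⟨a • x₁' + b • x₂', a * M₁ + b * M₂ + a * b * ((x₁' - x₂') (x₁ - x₂)), ?_⟩
  rintro r ⟨z, z', hz, rfl⟩
  have h₁ : (x₁' - z') (z - x₁) ≤ M₁ := hM₁ ⟨z, z', hz, rfl⟩
  have h₂ : (x₂' - z') (z - x₂) ≤ M₂ := hM₂ ⟨z, z', hz, rfl⟩
  have hb' : b = 1 - a := by linarith
  subst hb'
  have key : ((a • x₁' + (1 - a) • x₂') - z') (z - (a • x₁ + (1 - a) • x₂)) =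
      a * ((x₁' - z') (z - x₁)) + (1 - a) * ((x₂' - z') (z - x₂)) +
        a * (1 - a) * ((x₁' - x₂') (x₁ - x₂)) := by
    simp only [ContinuousLinearMap.sub_apply, ContinuousLinearMap.add_apply,
      ContinuousLinearMap.coe_smul', Pi.smul_apply, map_sub, map_add, map_smul,
      smul_eq_mul]
    ring
  rw [key]
  have h3 : a * ((x₁' - z') (z - x₁)) ≤ a * M₁ := by nlinarith
  have h4 : (1 - a) * ((x₂' - z') (z - x₂)) ≤ (1 - a) * M₂ := by nlinarith
  linarith

set_option maxHeartbeats 1000000 in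
private lemma fitz_subset_closure (T : X → Set (DualX X)) (hmono : IsMonotoneOp T)
    (hreg : RegularityProperty T) : FitzDom1 T ⊆ closure (OpDom T) := by
  rintro x ⟨x', M₀, hM₀⟩
  obtain ⟨y₀, y₀', hy₀⟩ : ∃ y₀ y₀', y₀' ∈ T y₀ := by
    obtain ⟨y₀, y₀', h⟩ := opdom_nonempty T hreg
    exact ⟨y₀, y₀', h⟩
  set M : ℝ := max M₀ 0 with hMdef
  have hM : ∀ z z', z' ∈ T z → (x' - z') (z - x) ≤ M :=
    fun z z' hz => le_trans (hM₀ ⟨z, z', hz, rfl⟩) (le_max_left _ _)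
  have hM0 : (0:ℝ) ≤ M := le_max_right _ _
  -- key step: every point x + t • (y₀ - x), 0 < t ≤ 1, lies in the closure of the domain
  have hstep : ∀ t : ℝ, 0 < t → t ≤ 1 → x + t • (y₀ - x) ∈ closure (OpDom T) := by
    intro t ht0 ht1
    set xt : X := x + t • (y₀ - x) with hxt
    by_contra hc
    rw [Metric.mem_closure_iff] at hc
    push_neg at hc
    obtain ⟨δ, hδ, hsep⟩ := hc
    set B : ℝ := ((1 - t) * M + t * ‖y₀' - x'‖ * ‖y₀ - xt‖) / δ + ‖y₀' - x'‖ + ‖x'‖ with hB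
    have hL : LVal T xt 0 ≤ (B : EReal) := by
      apply lval_le_of_forall
      intro z z' hz hne
      have hdist : δ ≤ ‖xt - z‖ := by
        have := hsep z ⟨z', hz⟩
        rwa [dist_eq_norm] at this
      have hnpos : (0:ℝ) < ‖xt - z‖ := lt_of_lt_of_le hδ hdist
      -- decompose xt - z
      have e1 : xt - z = (1 - t) • (x - z) + t • (y₀ - z) := by
        rw [hxt]; module
      have h1 : (z' - x') (x - z) ≤ M := by
        have := hM z z' hz
        have e : (z' - x') (x - z) = (x' - z') (z - x) := by
          simp only [ContinuousLinearMap.sub_apply, map_sub]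
          ring
        rw [e]; exact this
      have h2 : (z' - y₀') (y₀ - z) ≤ 0 := by
        have hm := hmono hz hy₀
        have e : (z' - y₀') (y₀ - z) = -((z' - y₀') (z - y₀)) := by
          rw [← map_neg]; congr 1; abel
        rw [e]; linarith
      have h3 : (y₀' - x') (y₀ - z) ≤ ‖y₀' - x'‖ * ‖y₀ - z‖ :=
        le_trans (le_abs_self _) ((y₀' - x').le_opNorm (y₀ - z))
      have h4 : ‖y₀ - z‖ ≤ ‖y₀ - xt‖ + ‖xt - z‖ := by
        have := dist_triangle y₀ xt z
        simpa [dist_eq_norm] using this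
      have h5 : x' (xt - z) ≤ ‖x'‖ * ‖xt - z‖ :=
        le_trans (le_abs_self _) (x'.le_opNorm (xt - z))
      -- numerator bound
      have hnum : (z' - 0) (xt - z) ≤
          ((1 - t) * M + t * ‖y₀' - x'‖ * ‖y₀ - xt‖) +
            (t * ‖y₀' - x'‖ + ‖x'‖) * ‖xt - z‖ := by
        have e2 : (z' - 0) (xt - z) = (z' - x') (xt - z) + x' (xt - z) := by
          simp [ContinuousLinearMap.sub_apply]
        have e3 : (z' - x') (xt - z) =
            (1 - t) * ((z' - x') (x - z)) + t * ((z' - x') (y₀ - z)) := by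
          rw [e1, map_add, map_smul, map_smul, smul_eq_mul, smul_eq_mul]
        have e4 : (z' - x') (y₀ - z) = (z' - y₀') (y₀ - z) + (y₀' - x') (y₀ - z) := by
          simp only [ContinuousLinearMap.sub_apply]
          ring
        have hny : (0:ℝ) ≤ ‖y₀' - x'‖ := norm_nonneg _
        rw [e2, e3, e4]
        have hb1 : t * ((z' - y₀') (y₀ - z) + (y₀' - x') (y₀ - z)) ≤
            t * (‖y₀' - x'‖ * (‖y₀ - xt‖ + ‖xt - z‖)) := by
          have : (z' - y₀') (y₀ - z) + (y₀' - x') (y₀ - z) ≤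
              ‖y₀' - x'‖ * (‖y₀ - xt‖ + ‖xt - z‖) := by
            nlinarith
          nlinarith
        have hb2 : (1 - t) * ((z' - x') (x - z)) ≤ (1 - t) * M := by nlinarith
        nlinarith
      -- divide
      have hC : (0:ℝ) ≤ (1 - t) * M + t * ‖y₀' - x'‖ * ‖y₀ - xt‖ := by
        have n1 := norm_nonneg (y₀' - x')
        have n2 := norm_nonneg (y₀ - xt)
        have p1 : (0:ℝ) ≤ (1 - t) * M := mul_nonneg (by linarith) hM0
        have p2 : (0:ℝ) ≤ t * ‖y₀' - x'‖ * ‖y₀ - xt‖ :=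
          mul_nonneg (mul_nonneg ht0.le n1) n2
        linarith
      set C : ℝ := (1 - t) * M + t * ‖y₀' - x'‖ * ‖y₀ - xt‖ with hCdef
      rw [div_le_iff₀ hnpos]
      have hBC : C / δ * ‖xt - z‖ ≥ C := by
        have : C / δ * δ ≤ C / δ * ‖xt - z‖ := by
          apply mul_le_mul_of_nonneg_left hdist (by positivity)
        rwa [div_mul_cancel₀ C (ne_of_gt hδ)] at this
      have hD : (t * ‖y₀' - x'‖ + ‖x'‖) * ‖xt - z‖ ≤
          (‖y₀' - x'‖ + ‖x'‖) * ‖xt - z‖ := by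
        have : t * ‖y₀' - x'‖ ≤ ‖y₀' - x'‖ := by nlinarith [norm_nonneg (y₀' - x')]
        nlinarith
      calc (z' - 0) (xt - z) ≤ C + (t * ‖y₀' - x'‖ + ‖x'‖) * ‖xt - z‖ := hnum
        _ ≤ C / δ * ‖xt - z‖ + (‖y₀' - x'‖ + ‖x'‖) * ‖xt - z‖ := by linarith
        _ = B * ‖xt - z‖ := by rw [hB]; ring
    have hxtd : xt ∈ OpDom T := hreg xt (lt_of_le_of_lt hL (EReal.coe_lt_top B))
    have := hsep xt hxtd
    simp at this
    linarith
  -- pass to the limit t → 0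
  rw [Metric.mem_closure_iff]
  intro ε hε
  set t : ℝ := min 1 (ε / (2 * (‖y₀ - x‖ + 1))) with htdef
  have ht0 : 0 < t := lt_min one_pos (by positivity)
  have ht1 : t ≤ 1 := min_le_left _ _
  have htsmall : t * ‖y₀ - x‖ < ε / 2 := by
    have h1 : t ≤ ε / (2 * (‖y₀ - x‖ + 1)) := min_le_right _ _
    have h2 : (0:ℝ) < 2 * (‖y₀ - x‖ + 1) := by positivity
    have h3 : t * ‖y₀ - x‖ ≤ ε / (2 * (‖y₀ - x‖ + 1)) * ‖y₀ - x‖ :=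
      mul_le_mul_of_nonneg_right h1 (norm_nonneg _)
    have h4 : ε / (2 * (‖y₀ - x‖ + 1)) * ‖y₀ - x‖ < ε / 2 := by
      rw [div_mul_eq_mul_div, div_lt_div_iff₀ h2 two_pos]
      nlinarith [norm_nonneg (y₀ - x)]
    linarith
  have hxt := hstep t ht0 ht1
  rw [Metric.mem_closure_iff] at hxt
  obtain ⟨w, hw, hwd⟩ := hxt (ε / 2) (by linarith)
  refine ⟨w, hw, ?_⟩
  have hdx : dist x (x + t • (y₀ - x)) = t * ‖y₀ - x‖ := by
    rw [dist_eq_norm]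
    have : x - (x + t • (y₀ - x)) = -(t • (y₀ - x)) := by abel
    rw [this, norm_neg, norm_smul, Real.norm_eq_abs, abs_of_pos ht0]
  calc dist x w ≤ dist x (x + t • (y₀ - x)) + dist (x + t • (y₀ - x)) w :=
        dist_triangle _ _ _
    _ < ε / 2 + ε / 2 := by rw [hdx]; exact add_lt_add htsmall hwd
    _ = ε := by ring

/-- A monotone operator with the regularity property satisfies
`π₁ dom φ_T ⊆ cl D_T`; consequently `cl D_T = cl co D_T = cl π₁ dom φ_T` and
`cl D_T` is convex. -/
theorem statement6 {X : Type*} [NormedAddCommGroup X] [NormedSpace ℝ X] [CompleteSpace X]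
    (T : X → Set (DualX X)) (hmono : IsMonotoneOp T)
    (hreg : RegularityProperty T) :
    FitzDom1 T ⊆ closure (OpDom T) ∧
      closure (OpDom T) = closure (convexHull ℝ (OpDom T)) ∧
      closure (OpDom T) = closure (FitzDom1 T) ∧
      Convex ℝ (closure (OpDom T)) := by
  have h1 : FitzDom1 T ⊆ closure (OpDom T) := fitz_subset_closure T hmono hreg
  have h2 : OpDom T ⊆ FitzDom1 T := opdom_subset_fitz T hmono
  have hco : convexHull ℝ (OpDom T) ⊆ FitzDom1 T :=
    convexHull_min h2 (fitz_convex T)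
  have heq1 : closure (OpDom T) = closure (convexHull ℝ (OpDom T)) := by
    apply Subset.antisymm
    · exact closure_mono (subset_convexHull ℝ _)
    · calc closure (convexHull ℝ (OpDom T)) ⊆ closure (closure (OpDom T)) :=
            closure_mono (hco.trans h1)
        _ = closure (OpDom T) := closure_closure
  have heq2 : closure (OpDom T) = closure (FitzDom1 T) := by
    apply Subset.antisymm
    · exact closure_mono h2
    · calc closure (FitzDom1 T) ⊆ closure (closure (OpDom T)) := closure_mono h1
        _ = closure (OpDom T) := closure_closure
  refine ⟨h1, heq1, heq2, ?_⟩
  rw [heq1]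
  exact (convex_convexHull ℝ _).closure
end
end

section
/- Let X be a real Banach space and D, C, K ⊆ X with cl D convex, C and K closed and convex, D ∩ int C ≠ ∅, and D ∩ C ∩ int K ≠ ∅. Then D ∩ int C ∩ int K ≠ ∅. -/
open Set Bornology
open scoped Pointwise

noncomputable section

variable {X : Type*} [NormedAddCommGroup X] [NormedSpace ℝ X]

/-- If `cl D` is convex, `C, K` are closed convex, `D ∩ int C ≠ ∅` and
`D ∩ C ∩ int K ≠ ∅`, then `D ∩ int C ∩ int K ≠ ∅`. -/
theorem statement12 {X : Type*} [NormedAddCommGroup X] [NormedSpace ℝ X] [CompleteSpace X]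
    (D C K : Set X) (hD : Convex ℝ (closure D))
    (hC : IsClosed C) (hCconv : Convex ℝ C)
    (hK : IsClosed K) (hKconv : Convex ℝ K)
    (h1 : (D ∩ interior C).Nonempty) (h2 : (D ∩ C ∩ interior K).Nonempty) :
    (D ∩ interior C ∩ interior K).Nonempty := by
  obtain ⟨a, haD, haC⟩ := h1
  obtain ⟨b, hb⟩ := h2
  obtain ⟨⟨hbD, hbC⟩, hbK⟩ := hb
  obtain ⟨ε, hε, hball⟩ := Metric.isOpen_iff.1 isOpen_interior b hbK
  obtain ⟨t, ht0, ht1, htε⟩ : ∃ t : ℝ, 0 < t ∧ t < 1 ∧ t * ‖a - b‖ < ε := by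
    rcases eq_or_lt_of_le (norm_nonneg (a - b)) with h | h
    · exact ⟨1/2, by norm_num, by norm_num, by rw [← h]; simpa using hε⟩
    · refine ⟨min (1/2) (ε / (2 * ‖a - b‖)), lt_min (by norm_num) (by positivity),
        lt_of_le_of_lt (min_le_left _ _) (by norm_num), ?_⟩
      calc min (1/2) (ε / (2 * ‖a - b‖)) * ‖a - b‖
          ≤ ε / (2 * ‖a - b‖) * ‖a - b‖ := by
            exact mul_le_mul_of_nonneg_right (min_le_right _ _) (norm_nonneg _)
        _ = ε / 2 := by field_simp
        _ < ε := by linarith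
  set x := t • a + (1 - t) • b with hx
  have hxC : x ∈ interior C :=
    hCconv.combo_interior_self_mem_interior haC hbC ht0 (by linarith) (by ring)
  have hxK : x ∈ interior K := by
    apply hball
    have : x - b = t • (a - b) := by
      simp only [hx, smul_sub, sub_smul, one_smul]; abel
    simp only [Metric.mem_ball, dist_eq_norm, this, norm_smul, Real.norm_eq_abs,
      abs_of_pos ht0]
    exact htε
  have hxD : x ∈ closure D :=
    hD (subset_closure haD) (subset_closure hbD) ht0.le (by linarith) (by ring)
  obtain ⟨d, hdU, hdD⟩ := mem_closure_iff.1 hxD (interior C ∩ interior K)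
    (isOpen_interior.inter isOpen_interior) ⟨hxC, hxK⟩
  exact ⟨d, ⟨hdD, hdU.1⟩, hdU.2⟩
end
end

section
/- Let X be a real Banach space and T : X ⇉ X* a monotone operator such that cl D_T is convex. If C ∈ 𝒞₀(T) and K ∈ 𝒞₀(T + ∂I_C), then C ∩ K ∈ 𝒞₀(T). -/
open Set Bornology
open scoped Pointwise

noncomputable section

variable {X : Type*} [NormedAddCommGroup X] [NormedSpace ℝ X]

/-- If `T` is monotone with `cl D_T` convex, `C ∈ 𝒞₀(T)` and
`K ∈ 𝒞₀(T + ∂I_C)`, then `C ∩ K ∈ 𝒞₀(T)`. -/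
theorem statement13 {X : Type*} [NormedAddCommGroup X] [NormedSpace ℝ X] [CompleteSpace X]
    (T : X → Set (DualX X)) (hmono : IsMonotoneOp T)
    (hconv : Convex ℝ (closure (OpDom T)))
    (C K : Set X) (hC : C ∈ CZero T) (hK : K ∈ CZero (OpSum T (IndSubdiff C))) :
    C ∩ K ∈ CZero T := by
  obtain ⟨hCcl, hCconv, y, hyT, hyC⟩ := hC
  obtain ⟨hKcl, hKconv, x, hxS, hxK⟩ := hK
  obtain ⟨u, t', ht', s', hs', -⟩ := hxS
  have hxT : x ∈ OpDom T := ⟨t', ht'⟩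
  have hxC : x ∈ C := hs'.1
  refine ⟨hCcl.inter hKcl, hCconv.inter hKconv, ?_⟩
  have hcont : ContinuousAt (fun t : ℝ => (1 - t) • x + t • y) 0 := by fun_prop
  have hx0 : (fun t : ℝ => (1 - t) • x + t • y) 0 = x := by simp
  have hev : ∀ᶠ t in nhds (0 : ℝ), (1 - t) • x + t • y ∈ interior K :=
    hcont.eventually_mem (isOpen_interior.mem_nhds (by simpa using hxK))
  have hIoo : ∀ᶠ t in nhdsWithin (0 : ℝ) (Ioi 0), t ∈ Ioo (0 : ℝ) 1 :=
    Ioo_mem_nhdsGT_of_mem ⟨le_refl 0, one_pos⟩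
  obtain ⟨t, ht01, htK⟩ := (hIoo.and (hev.filter_mono nhdsWithin_le_nhds)).exists
  set z : X := (1 - t) • x + t • y with hz
  have hzC : z ∈ interior C := by
    have := hCconv.combo_interior_closure_mem_interior (a := t) (b := 1 - t) hyC
      (subset_closure hxC) ht01.1 (by linarith [ht01.2]) (by ring)
    rw [hz, add_comm]
    exact this
  have hzcl : z ∈ closure (OpDom T) :=
    hconv (a := 1 - t) (b := t) (subset_closure hxT) (subset_closure hyT)
      (by linarith [ht01.2]) ht01.1.le (by ring)
  have hU : IsOpen (interior C ∩ interior K) := isOpen_interior.inter isOpen_interior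
  obtain ⟨w, hwU, hwT⟩ := mem_closure_iff.mp hzcl _ hU ⟨hzC, htK⟩
  exact ⟨w, hwT, by rw [interior_inter]; exact hwU⟩
end
end

section
/- Let X be a real Banach space and T : X ⇉ X* a maximal monotone operator with int D_T ≠ ∅. Then T is directionally inf bounded at every x ∈ int D_T. -/
open Set Bornology
open scoped Pointwise

noncomputable section

variable {X : Type*} [NormedAddCommGroup X] [NormedSpace ℝ X]

set_option maxHeartbeats 1000000 in
theorem aux_locBdd {X : Type*} [NormedAddCommGroup X] [NormedSpace ℝ X] [CompleteSpace X]
    (T : X → Set (DualX X)) (hmono : IsMonotoneOp T) {x : X}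
    (hx : x ∈ interior (OpDom T)) :
    ∃ ε > (0:ℝ), ∃ M > (0:ℝ), Metric.ball x ε ⊆ OpDom T ∧
      ∀ z ∈ Metric.ball x ε, ∀ z' ∈ T z, ‖z'‖ ≤ M := by
  -- choose r with closedBall x (2r) ⊆ OpDom T
  obtain ⟨r', hr', hball'⟩ := Metric.isOpen_iff.1 isOpen_interior x hx
  set r : ℝ := r' / 4 with hrdef
  have hr : 0 < r := by positivity
  have h2r : Metric.closedBall x (2 * r) ⊆ OpDom T := by
    intro w hw
    have : w ∈ Metric.ball x r' := by
      rw [Metric.mem_closedBall] at hw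
      rw [Metric.mem_ball]
      linarith
    exact interior_subset (hball' this)
  -- the sets C n
  set C : ℕ → Set X := fun n =>
    {w | ∀ z z', z' ∈ T z → ‖z - x‖ ≤ 2 * r → z' (w - z) ≤ n} with hCdef
  have hCclosed : ∀ n, IsClosed (C n) := by
    intro n
    have : C n = ⋂ (z : X) (z' : DualX X) (_ : z' ∈ T z) (_ : ‖z - x‖ ≤ 2 * r),
        {w | z' (w - z) ≤ n} := by
      ext w; simp only [hCdef, mem_setOf_eq, mem_iInter]
    rw [this]
    refine isClosed_iInter fun z => isClosed_iInter fun z' => isClosed_iInter fun _ =>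
      isClosed_iInter fun _ => ?_
    exact isClosed_le (z'.continuous.comp (continuous_id.sub continuous_const)) continuous_const
  -- midpoint closedness of C n
  have hCmid : ∀ n w₁ w₂, w₁ ∈ C n → w₂ ∈ C n →
      (1/2 : ℝ) • w₁ + (1/2 : ℝ) • w₂ ∈ C n := by
    intro n w₁ w₂ h1 h2 z z' hz' hzx
    have e : (1/2 : ℝ) • w₁ + (1/2 : ℝ) • w₂ - z
        = (1/2 : ℝ) • (w₁ - z) + (1/2 : ℝ) • (w₂ - z) := by module
    rw [e, map_add, map_smul, map_smul, smul_eq_mul, smul_eq_mul]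
    have := h1 z z' hz' hzx
    have := h2 z z' hz' hzx
    linarith
  -- reflected sets
  set D : ℕ → Set X := fun n => C n ∩ {w | x + (x - w) ∈ C n} with hDdef
  have hDclosed : ∀ n, IsClosed (D n) :=
    fun n => (hCclosed n).inter <| (hCclosed n).preimage (continuous_const.add (continuous_const.sub continuous_id))
  -- coverage of closedBall x r
  have hcov : ∀ w ∈ Metric.closedBall x r, ∃ n, w ∈ D n := by
    intro w hw
    have hwx : ‖w - x‖ ≤ r := by
      rw [Metric.mem_closedBall, dist_eq_norm] at hw; exact hw
    have hw2 : ‖(x + (x - w)) - x‖ ≤ r := by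
      have : (x + (x - w)) - x = -(w - x) := by abel
      rw [this, norm_neg]; exact hwx
    have hwdom : w ∈ OpDom T := h2r (by
      rw [Metric.mem_closedBall, dist_eq_norm]; nlinarith)
    have hw2dom : (x + (x - w)) ∈ OpDom T := h2r (by
      rw [Metric.mem_closedBall, dist_eq_norm]; nlinarith)
    obtain ⟨w₁, hw₁⟩ := hwdom
    obtain ⟨w₂, hw₂⟩ := hw2dom
    refine ⟨⌈max (3 * r * ‖w₁‖) (3 * r * ‖w₂‖)⌉₊, ?_, ?_⟩
    · -- w ∈ C n
      intro z z' hz' hzx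
      have hmon := hmono hw₁ hz'
      rw [ContinuousLinearMap.sub_apply] at hmon
      have h1 : z' (w - z) ≤ w₁ (w - z) := by linarith
      have h2 : w₁ (w - z) ≤ ‖w₁‖ * ‖w - z‖ :=
        le_trans (le_abs_self _) (w₁.le_opNorm _)
      have h3 : ‖w - z‖ ≤ 3 * r := by
        have := norm_sub_le_norm_sub_add_norm_sub w x z
        rw [norm_sub_rev x z] at this
        linarith
      have h4 : ‖w₁‖ * ‖w - z‖ ≤ 3 * r * ‖w₁‖ := by nlinarith [norm_nonneg w₁]
      calc z' (w - z) ≤ 3 * r * ‖w₁‖ := by linarith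
        _ ≤ max (3 * r * ‖w₁‖) (3 * r * ‖w₂‖) := le_max_left _ _
        _ ≤ _ := Nat.le_ceil _
    · -- reflection ∈ C n
      intro z z' hz' hzx
      have hmon := hmono hw₂ hz'
      rw [ContinuousLinearMap.sub_apply] at hmon
      have h1 : z' ((x + (x - w)) - z) ≤ w₂ ((x + (x - w)) - z) := by linarith
      have h2 : w₂ ((x + (x - w)) - z) ≤ ‖w₂‖ * ‖(x + (x - w)) - z‖ :=
        le_trans (le_abs_self _) (w₂.le_opNorm _)
      have h3 : ‖(x + (x - w)) - z‖ ≤ 3 * r := by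
        have := norm_sub_le_norm_sub_add_norm_sub (x + (x - w)) x z
        rw [norm_sub_rev x z] at this
        linarith
      have h4 : ‖w₂‖ * ‖(x + (x - w)) - z‖ ≤ 3 * r * ‖w₂‖ := by nlinarith [norm_nonneg w₂]
      calc z' ((x + (x - w)) - z) ≤ 3 * r * ‖w₂‖ := by linarith
        _ ≤ max (3 * r * ‖w₁‖) (3 * r * ‖w₂‖) := le_max_right _ _
        _ ≤ _ := Nat.le_ceil _
  -- Baire category in the closed ball
  haveI : CompleteSpace (Metric.closedBall x r) :=
    (Metric.isClosed_closedBall).completeSpace_coe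
  haveI : Nonempty (Metric.closedBall x r) :=
    ⟨⟨x, Metric.mem_closedBall_self hr.le⟩⟩
  have hcover : ⋃ n, ((Subtype.val : Metric.closedBall x r → X) ⁻¹' D n) = univ := by
    ext w
    simp only [mem_iUnion, mem_preimage, mem_univ, iff_true]
    exact hcov w w.2
  obtain ⟨n, ⟨p, hp⟩⟩ := nonempty_interior_of_iUnion_of_closed
    (f := fun n => (Subtype.val : Metric.closedBall x r → X) ⁻¹' D n)
    (fun n => (hDclosed n).preimage continuous_subtype_val) hcover
  obtain ⟨ρ, hρ, hρball⟩ := Metric.isOpen_iff.1 isOpen_interior p hp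
  have hkey : ∀ w ∈ Metric.closedBall x r, dist w (p : X) < ρ → w ∈ D n := by
    intro w hw hd
    have : (⟨w, hw⟩ : Metric.closedBall x r) ∈ Metric.ball p ρ := by
      rw [Metric.mem_ball, Subtype.dist_eq]; exact hd
    have h := interior_subset (hρball this)
    exact h
  -- find a genuine ball inside D n
  set s : ℝ := min 1 (ρ / (8 * r)) with hsdef
  have hs : 0 < s := lt_min one_pos (by positivity)
  have hs1 : s ≤ 1 := min_le_left _ _
  have hsρ : s * r ≤ ρ / 8 := by
    have : s ≤ ρ / (8 * r) := min_le_right _ _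
    rw [div_eq_mul_inv] at this ⊢
    calc s * r ≤ ρ * (8 * r)⁻¹ * r := by nlinarith
      _ = ρ * 8⁻¹ := by field_simp
  set u : X := x + (1 - s) • ((p : X) - x) with hudef
  set δ : ℝ := s * r / 2 with hδdef
  have hδ : 0 < δ := by positivity
  have hpx : ‖(p : X) - x‖ ≤ r := by
    have := p.2
    rw [Metric.mem_closedBall, dist_eq_norm] at this
    exact this
  have hballu : Metric.ball u δ ⊆ D n := by
    intro w hw
    rw [Metric.mem_ball, dist_eq_norm] at hw
    have hux : ‖u - x‖ ≤ (1 - s) * r := by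
      have e : u - x = (1 - s) • ((p : X) - x) := by rw [hudef]; abel
      rw [e, norm_smul, Real.norm_eq_abs, abs_of_nonneg (by linarith)]
      nlinarith
    have hup : ‖u - (p : X)‖ ≤ s * r := by
      have e : u - (p : X) = s • (x - (p : X)) := by rw [hudef]; module
      rw [e, norm_smul, Real.norm_eq_abs, abs_of_nonneg hs.le, norm_sub_rev]
      nlinarith
    have hwx : w ∈ Metric.closedBall x r := by
      rw [Metric.mem_closedBall, dist_eq_norm]
      have := norm_sub_le_norm_sub_add_norm_sub w u x
      nlinarith
    have hwp : dist w (p : X) < ρ := by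
      rw [dist_eq_norm]
      have := norm_sub_le_norm_sub_add_norm_sub w u (p : X)
      nlinarith
    exact hkey w hwx hwp
  -- symmetry + midpoint: ball x δ ⊆ C n
  have hballx : Metric.ball x δ ⊆ C n := by
    intro w hw
    rw [Metric.mem_ball, dist_eq_norm] at hw
    set v : X := w - x with hvdef
    have h1 : u + v ∈ Metric.ball u δ := by
      rw [Metric.mem_ball, dist_eq_norm]
      simpa using hw
    have h2 : u - v ∈ Metric.ball u δ := by
      rw [Metric.mem_ball, dist_eq_norm]
      simpa [norm_sub_rev] using hw
    have hA : u + v ∈ C n := (hballu h1).1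
    have hB : x + (x - (u - v)) ∈ C n := (hballu h2).2
    have e : w = (1/2 : ℝ) • (u + v) + (1/2 : ℝ) • (x + (x - (u - v))) := by
      rw [hvdef]; module
    rw [e]
    exact hCmid n _ _ hA hB
  -- conclude boundedness
  refine ⟨δ / 4, by positivity, 4 * n / δ + 1, by positivity, ?_, ?_⟩
  · intro w hw
    apply h2r
    rw [Metric.mem_ball] at hw
    rw [Metric.mem_closedBall]
    nlinarith
  · intro z hz z' hz'
    rw [Metric.mem_ball, dist_eq_norm] at hz
    have hz2r : ‖z - x‖ ≤ 2 * r := by nlinarith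
    have hzball : ∀ w ∈ Metric.ball x δ, z' (w - z) ≤ n := fun w hw => hballx hw z z' hz' hz2r
    -- operator norm bound
    have hK : ‖z'‖ ≤ ((n : ℝ) + ‖z'‖ * (δ / 4)) / (δ / 2) := by
      apply ContinuousLinearMap.opNorm_le_bound
      · have : (0:ℝ) ≤ ‖z'‖ * (δ / 4) := by positivity
        positivity
      · intro v
        rcases eq_or_ne v 0 with rfl | hv
        · simp
        · have hvn : 0 < ‖v‖ := norm_pos_iff.2 hv
          set c : ℝ := (δ / 2) / ‖v‖ with hcdef
          have hc : 0 < c := by positivity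
          have key : ∀ v' : X, ‖v'‖ = ‖v‖ → c * z' v' ≤ (n : ℝ) + ‖z'‖ * (δ / 4) := by
            intro v' hv'
            have hwmem : x + c • v' ∈ Metric.ball x δ := by
              rw [Metric.mem_ball, dist_eq_norm]
              have : ‖x + c • v' - x‖ = c * ‖v‖ := by
                rw [show x + c • v' - x = c • v' by abel, norm_smul,
                  Real.norm_eq_abs, abs_of_nonneg hc.le, hv']
              rw [this, hcdef]
              rw [div_mul_cancel₀ _ hvn.ne']
              linarith
            have := hzball _ hwmem
            have e : x + c • v' - z = c • v' + (x - z) := by abel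
            rw [e, map_add, map_smul, smul_eq_mul] at this
            have hxz : z' (x - z) ≥ -(‖z'‖ * (δ / 4)) := by
              have h1 : |z' (x - z)| ≤ ‖z'‖ * ‖x - z‖ := z'.le_opNorm _
              have h2 : ‖x - z‖ ≤ δ / 4 := by rw [norm_sub_rev]; linarith
              have h3 : ‖z'‖ * ‖x - z‖ ≤ ‖z'‖ * (δ / 4) :=
                mul_le_mul_of_nonneg_left h2 (norm_nonneg _)
              have := neg_abs_le (z' (x - z))
              linarith
            linarith
          have k1 := key v rfl
          have k2 := key (-v) (by rw [norm_neg])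
          rw [map_neg] at k2
          have habs : c * |z' v| ≤ (n : ℝ) + ‖z'‖ * (δ / 4) := by
            rcases abs_cases (z' v) with ⟨h, _⟩ | ⟨h, _⟩
            · rw [h]; exact k1
            · rw [h]; nlinarith
          have hcv : c * ‖v‖ = δ / 2 := div_mul_cancel₀ _ hvn.ne'
          rw [Real.norm_eq_abs, div_mul_eq_mul_div,
            le_div_iff₀ (by positivity : (0:ℝ) < δ / 2)]
          nlinarith [habs, hcv, hvn, abs_nonneg (z' v)]
    have h1 : ‖z'‖ * (δ / 2) ≤ (n : ℝ) + ‖z'‖ * (δ / 4) := by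
      rw [le_div_iff₀ (by positivity : (0:ℝ) < δ / 2)] at hK
      exact hK
    have hQ : 4 * (n : ℝ) / δ * δ = 4 * n := div_mul_cancel₀ _ hδ.ne'
    nlinarith [h1, hδ, hQ, Nat.cast_nonneg (α := ℝ) n]

/-- A maximal monotone operator with `int D_T ≠ ∅` is directionally inf
bounded at every point of `int D_T`. -/
theorem statement17 {X : Type*} [NormedAddCommGroup X] [NormedSpace ℝ X] [CompleteSpace X]
    (T : X → Set (DualX X)) (hmax : IsMaxMonotone T)
    (hint : (interior (OpDom T)).Nonempty) :
    ∀ x ∈ interior (OpDom T), DirInfBdd T x := by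
  intro x hx y
  obtain ⟨ε, hε, M, hM, hdom, hbdd⟩ := aux_locBdd T hmax.1 hx
  refine ⟨ε, hε, M, hM, ?_⟩
  rintro z ⟨⟨t, ⟨ht0, ht1⟩, a, ha, hzeq⟩, hzdom⟩
  obtain ⟨z', hz'⟩ := hzdom
  refine ⟨z', hz', ?_⟩
  have hzy : z - y = t • (a - y) := by rw [hzeq]; module
  have hnzy : ‖z - y‖ = t * ‖a - y‖ := by
    rw [hzy, norm_smul, Real.norm_eq_abs, abs_of_nonneg ht0]
  rcases ht1.lt_or_eq with hlt | heq
  · -- t < 1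
    obtain ⟨a', ha'⟩ := hdom ha
    have hmon := hmax.1 hz' ha'
    have hza : z - a = (1 - t) • (y - a) := by rw [hzeq]; module
    rw [hza, map_smul, smul_eq_mul] at hmon
    have h1t : (0:ℝ) < 1 - t := by linarith
    have hW : 0 ≤ (z' - a') (y - a) := nonneg_of_mul_nonneg_right hmon h1t
    rw [ContinuousLinearMap.sub_apply] at hW
    have hya : z' (a - y) ≤ a' (a - y) := by
      have e1 : z' (y - a) = - z' (a - y) := by
        rw [show y - a = -(a - y) by abel, map_neg]
      have e2 : a' (y - a) = - a' (a - y) := by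
        rw [show y - a = -(a - y) by abel, map_neg]
      rw [e1, e2] at hW
      linarith
    have hab : a' (a - y) ≤ M * ‖a - y‖ := by
      have h1 : a' (a - y) ≤ ‖a'‖ * ‖a - y‖ :=
        le_trans (le_abs_self _) (a'.le_opNorm _)
      have h2 : ‖a'‖ ≤ M := hbdd a ha a' ha'
      nlinarith [norm_nonneg (a - y)]
    rw [hnzy, hzy, map_smul, smul_eq_mul]
    calc t * z' (a - y) ≤ t * (M * ‖a - y‖) := by nlinarith
      _ = M * (t * ‖a - y‖) := by ring
  · -- t = 1
    have hz : z = a := by rw [hzeq, heq]; simp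
    have h1 : z' (z - y) ≤ ‖z'‖ * ‖z - y‖ :=
      le_trans (le_abs_self _) (z'.le_opNorm _)
    have h2 : ‖z'‖ ≤ M := hbdd z (hz ▸ ha) z' hz'
    nlinarith [norm_nonneg (z - y)]
end
end
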